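/- Suppose the feature functions are minimal in the sense that the only vector V ∈ ℝ^m for which x ↦ ⟨V, φ(x)⟩ is Lebesgue-almost-everywhere constant on ℝ^d is V = 0. Then for every λ ∈ ℝ^m with Z(λ) finite, the covariance matrix Cov_{p_λ}(φ) is positive definite; consequently the Hessian ∇²Z(λ) = Cov_{p_λ}(φ) is positive definite everywhere and Z is strictly convex on its domain. -/

import Mathlib

open MeasureTheory Real Matrix

noncomputable section

def partZ {d m : ℕ} (φ : (Fin d → ℝ) → Fin m → ℝ) (l : Fin m → ℝ) : ℝ :=
  Real.log (∫ x : Fin d → ℝ, Real.exp (∑ k, l k * φ x k))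

def maxEntDensity {d m : ℕ} (φ : (Fin d → ℝ) → Fin m → ℝ) (l : Fin m → ℝ)
    (x : Fin d → ℝ) : ℝ :=
  Real.exp ((∑ k, l k * φ x k) - partZ φ l)

def featMean {d m : ℕ} (φ : (Fin d → ℝ) → Fin m → ℝ) (l : Fin m → ℝ) (k : Fin m) : ℝ :=
  ∫ x : Fin d → ℝ, φ x k * maxEntDensity φ l x

def featCovMat {d m : ℕ} (φ : (Fin d → ℝ) → Fin m → ℝ) (l : Fin m → ℝ) :
    Matrix (Fin m) (Fin m) ℝ :=
  Matrix.of fun k r =>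
    (∫ x : Fin d → ℝ, φ x k * φ x r * maxEntDensity φ l x) - featMean φ l k * featMean φ l r

def ZFinite {d m : ℕ} (φ : (Fin d → ℝ) → Fin m → ℝ) (l : Fin m → ℝ) : Prop :=
  Integrable (fun x : Fin d → ℝ => Real.exp (∑ k, l k * φ x k)) ∧
  0 < ∫ x : Fin d → ℝ, Real.exp (∑ k, l k * φ x k)

-- Auxiliary lemmas
lemma my_integral_pos {α : Type*} [MeasurableSpace α] {μ : Measure α} [NeZero μ]
    {f : α → ℝ} (hf : Integrable f μ) (hpos : ∀ x, 0 < f x) : 0 < ∫ x, f x ∂μ := by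
  rw [integral_pos_iff_support_of_nonneg_ae (Filter.Eventually.of_forall fun x => (hpos x).le) hf]
  have : Function.support f = Set.univ := Set.eq_univ_of_forall fun x => (hpos x).ne'
  rw [this]
  exact Measure.measure_univ_pos.2 (NeZero.ne _)

lemma amgm_eq {x y a b : ℝ} (hx : 0 < x) (hy : 0 < y) (ha : 0 < a) (hb : 0 < b)
    (hab : a + b = 1) (heq : x ^ a * y ^ b = a * x + b * y) : x = y := by
  by_contra hne
  have hlog : Real.log x ≠ Real.log y := fun h =>
    hne (Real.log_injOn_pos (Set.mem_Ioi.2 hx) (Set.mem_Ioi.2 hy) h)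
  have hlt := strictConvexOn_exp.2 (Set.mem_univ (Real.log x)) (Set.mem_univ (Real.log y))
    hlog ha hb hab
  rw [smul_eq_mul, smul_eq_mul, Real.exp_add, Real.exp_log hx, Real.exp_log hy] at hlt
  have h1 : x ^ a = Real.exp (a * Real.log x) := by
    rw [mul_comm, Real.exp_mul, Real.exp_log hx]
  have h2 : y ^ b = Real.exp (b * Real.log y) := by
    rw [mul_comm, Real.exp_mul, Real.exp_log hy]
  rw [h1, h2, ← Real.exp_add] at heq
  rw [← Real.exp_add] at hlt
  simp only [smul_eq_mul] at hlt
  exact absurd heq (ne_of_lt hlt)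

section Density

variable {d m : ℕ} {φ : (Fin d → ℝ) → Fin m → ℝ} {l : Fin m → ℝ}

lemma meas_sum (hφ : Measurable φ) (c : Fin m → ℝ) :
    Measurable fun x : Fin d → ℝ => ∑ k, c k * φ x k :=
  Finset.measurable_sum _ fun k _ => ((measurable_pi_apply k).comp hφ).const_mul (c k)

lemma dens_eq (hZ : ZFinite φ l) (x : Fin d → ℝ) :
    maxEntDensity φ l x =
      Real.exp (∑ k, l k * φ x k) * (∫ y : Fin d → ℝ, Real.exp (∑ k, l k * φ y k))⁻¹ := by
  rw [maxEntDensity, Real.exp_sub, partZ, Real.exp_log hZ.2, div_eq_mul_inv]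

lemma dens_pos (x : Fin d → ℝ) : 0 < maxEntDensity φ l x := Real.exp_pos _

lemma integrable_dens (hZ : ZFinite φ l) : Integrable (maxEntDensity φ l) := by
  have := hZ.1.mul_const (∫ y : Fin d → ℝ, Real.exp (∑ k, l k * φ y k))⁻¹
  exact this.congr (Filter.Eventually.of_forall fun x => (dens_eq hZ x).symm)

lemma integral_dens (hZ : ZFinite φ l) : ∫ x : Fin d → ℝ, maxEntDensity φ l x = 1 := by
  simp_rw [dens_eq hZ]
  rw [integral_mul_const, mul_inv_cancel₀ hZ.2.ne']

lemma covmat_symm : (featCovMat φ l).IsHermitian := by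
  ext k r
  simp only [featCovMat, Matrix.conjTranspose_apply, Matrix.of_apply, star_trivial]
  have : (fun x : Fin d → ℝ => φ x r * φ x k * maxEntDensity φ l x)
      = fun x => φ x k * φ x r * maxEntDensity φ l x := by
    funext x; ring
  rw [this, mul_comm (featMean φ l r)]

lemma int_gp (hL2b : ∀ k, Integrable (fun x : Fin d → ℝ => φ x k * maxEntDensity φ l x))
    (V : Fin m → ℝ) :
    Integrable (fun x => (∑ k, V k * φ x k) * maxEntDensity φ l x) := by
  have : (fun x => (∑ k, V k * φ x k) * maxEntDensity φ l x)
      = fun x => ∑ k, V k * (φ x k * maxEntDensity φ l x) := by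
    funext x; simp only [Finset.sum_mul, mul_assoc]
  rw [this]
  exact integrable_finset_sum _ fun k _ => (hL2b k).const_mul (V k)

lemma hg2_pt (V : Fin m → ℝ) (x : Fin d → ℝ) :
    (∑ k, V k * φ x k) * (∑ k, V k * φ x k) * maxEntDensity φ l x
      = ∑ k, ∑ r, V k * V r * (φ x k * φ x r * maxEntDensity φ l x) := by
  simp only [Finset.sum_mul, Finset.mul_sum]
  exact Finset.sum_congr rfl fun k _ => Finset.sum_congr rfl fun r _ => by ring

lemma int_g2p
    (hL2a : ∀ k r, Integrable (fun x : Fin d → ℝ => φ x k * φ x r * maxEntDensity φ l x))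
    (V : Fin m → ℝ) :
    Integrable (fun x => (∑ k, V k * φ x k) * (∑ k, V k * φ x k) * maxEntDensity φ l x) := by
  rw [funext (hg2_pt V)]
  exact integrable_finset_sum _ fun k _ =>
    integrable_finset_sum _ fun r _ => (hL2a k r).const_mul _

lemma int_var (hZ : ZFinite φ l)
    (hL2a : ∀ k r, Integrable (fun x : Fin d → ℝ => φ x k * φ x r * maxEntDensity φ l x))
    (hL2b : ∀ k, Integrable (fun x : Fin d → ℝ => φ x k * maxEntDensity φ l x))
    (V : Fin m → ℝ) (M : ℝ) :
    Integrable (fun x => ((∑ k, V k * φ x k) - M) ^ 2 * maxEntDensity φ l x) := by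
  have hpt : (fun x => ((∑ k, V k * φ x k) - M) ^ 2 * maxEntDensity φ l x)
      = fun x => ((∑ k, V k * φ x k) * (∑ k, V k * φ x k) * maxEntDensity φ l x
          - (2 * M) * ((∑ k, V k * φ x k) * maxEntDensity φ l x))
        + (M * M) * maxEntDensity φ l x := by
    funext x; ring
  rw [hpt]
  exact ((int_g2p hL2a V).sub ((int_gp hL2b V).const_mul _)).add
    ((integrable_dens hZ).const_mul _)

lemma quad_form_eq (hZ : ZFinite φ l)
    (hL2a : ∀ k r, Integrable (fun x : Fin d → ℝ => φ x k * φ x r * maxEntDensity φ l x))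
    (hL2b : ∀ k, Integrable (fun x : Fin d → ℝ => φ x k * maxEntDensity φ l x))
    (V : Fin m → ℝ) :
    V ⬝ᵥ featCovMat φ l *ᵥ V =
      ∫ x : Fin d → ℝ,
        ((∑ k, V k * φ x k) - ∫ y : Fin d → ℝ, (∑ k, V k * φ y k) * maxEntDensity φ l y) ^ 2 *
          maxEntDensity φ l x := by
  set p := maxEntDensity φ l with hp
  set g : (Fin d → ℝ) → ℝ := fun x => ∑ k, V k * φ x k with hg
  have igp : Integrable (fun x => g x * p x) := int_gp hL2b V
  have ig2p : Integrable (fun x => g x * g x * p x) := int_g2p hL2a V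
  have key1 : ∫ x, g x * g x * p x
      = ∑ k, ∑ r, V k * V r * ∫ x, φ x k * φ x r * p x := by
    rw [funext (hg2_pt V : ∀ x, g x * g x * p x = _), integral_finset_sum _ fun k _ =>
      integrable_finset_sum _ fun r _ => (hL2a k r).const_mul _]
    refine Finset.sum_congr rfl fun k _ => ?_
    rw [integral_finset_sum _ fun r _ => (hL2a k r).const_mul _]
    exact Finset.sum_congr rfl fun r _ => integral_const_mul _ _
  have key2 : ∫ x, g x * p x = ∑ k, V k * featMean φ l k := by
    have h1 : (fun x => g x * p x) = fun x => ∑ k, V k * (φ x k * p x) := by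
      funext x; simp only [hg, Finset.sum_mul, mul_assoc]
    rw [h1, integral_finset_sum _ fun k _ => (hL2b k).const_mul (V k)]
    exact Finset.sum_congr rfl fun k _ => integral_const_mul _ _
  set M := ∫ x, g x * p x with hM
  have lhs_eq : V ⬝ᵥ featCovMat φ l *ᵥ V
      = (∑ k, ∑ r, V k * V r * ∫ x, φ x k * φ x r * p x) - M ^ 2 := by
    simp only [dotProduct, Matrix.mulVec, featCovMat, Matrix.of_apply]
    have step1 : ∑ k, V k * ∑ r,
        ((∫ x, φ x k * φ x r * p x) - featMean φ l k * featMean φ l r) * V r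
        = ∑ k, ∑ r, (V k * V r * (∫ x, φ x k * φ x r * p x)
            - (V k * featMean φ l k) * (V r * featMean φ l r)) := by
      refine Finset.sum_congr rfl fun k _ => ?_
      rw [Finset.mul_sum]
      exact Finset.sum_congr rfl fun r _ => by ring
    rw [step1]
    have step2 : ∑ k, ∑ r, (V k * V r * (∫ x, φ x k * φ x r * p x)
          - (V k * featMean φ l k) * (V r * featMean φ l r))
        = (∑ k, ∑ r, V k * V r * (∫ x, φ x k * φ x r * p x))
          - ∑ k, ∑ r, (V k * featMean φ l k) * (V r * featMean φ l r) := by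
      rw [← Finset.sum_sub_distrib]
      exact Finset.sum_congr rfl fun k _ => Finset.sum_sub_distrib _ _
    rw [step2, ← Finset.sum_mul_sum, key2, ← pow_two]
  have var_eq : ∫ x, (g x - M) ^ 2 * p x = (∫ x, g x * g x * p x) - M ^ 2 := by
    have hpt : (fun x => (g x - M) ^ 2 * p x)
        = fun x => (g x * g x * p x - (2 * M) * (g x * p x)) + (M * M) * p x := by
      funext x; ring
    rw [hpt]
    calc ∫ x, (g x * g x * p x - 2 * M * (g x * p x) + M * M * p x)
        = (∫ x, (g x * g x * p x - 2 * M * (g x * p x))) + ∫ x, M * M * p x :=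
          integral_add (ig2p.sub (igp.const_mul _)) ((integrable_dens hZ).const_mul _)
      _ = ((∫ x, g x * g x * p x) - ∫ x, 2 * M * (g x * p x)) + ∫ x, M * M * p x := by
          rw [integral_sub ig2p (igp.const_mul _)]
      _ = ((∫ x, g x * g x * p x) - 2 * M * ∫ x, g x * p x) + M * M * ∫ x, p x := by
          rw [integral_const_mul, integral_const_mul]
      _ = (∫ x, g x * g x * p x) - M ^ 2 := by
          rw [integral_dens hZ, ← hM]; ring
  have : V ⬝ᵥ featCovMat φ l *ᵥ V = ∫ x, (g x - M) ^ 2 * p x := by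
    rw [lhs_eq, ← key1, ← var_eq]
  exact this

end Density

section Convexity

variable {d m : ℕ} {φ : (Fin d → ℝ) → Fin m → ℝ}

lemma combo_pt (l₁ l₂ : Fin m → ℝ) (a b : ℝ) (x : Fin d → ℝ) :
    ∑ k, (a • l₁ + b • l₂) k * φ x k
      = a * (∑ k, l₁ k * φ x k) + b * (∑ k, l₂ k * φ x k) := by
  simp only [Pi.add_apply, Pi.smul_apply, smul_eq_mul, add_mul, Finset.sum_add_distrib,
    Finset.mul_sum, mul_assoc]

lemma exp_combo (l₁ l₂ : Fin m → ℝ) (a b : ℝ) (x : Fin d → ℝ) :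
    Real.exp (∑ k, (a • l₁ + b • l₂) k * φ x k)
      = Real.exp (∑ k, l₁ k * φ x k) ^ a * Real.exp (∑ k, l₂ k * φ x k) ^ b := by
  rw [combo_pt, Real.exp_add, mul_comm a, mul_comm b, Real.exp_mul, Real.exp_mul]

lemma int_mid (hφ : Measurable φ) {l₁ l₂ : Fin m → ℝ} (h₁ : ZFinite φ l₁) (h₂ : ZFinite φ l₂)
    {a b : ℝ} (ha : 0 ≤ a) (hb : 0 ≤ b) (hab : a + b = 1) :
    Integrable (fun x : Fin d → ℝ => Real.exp (∑ k, (a • l₁ + b • l₂) k * φ x k)) := by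
  refine Integrable.mono' ((h₁.1.const_mul a).add (h₂.1.const_mul b))
    (meas_sum hφ _).exp.aestronglyMeasurable (Filter.Eventually.of_forall fun x => ?_)
  rw [Real.norm_eq_abs, abs_of_pos (Real.exp_pos _), exp_combo]
  exact Real.geom_mean_le_arith_mean2_weighted ha hb (Real.exp_pos _).le (Real.exp_pos _).le hab

lemma mid_ZFinite (hφ : Measurable φ) {l₁ l₂ : Fin m → ℝ}
    (h₁ : ZFinite φ l₁) (h₂ : ZFinite φ l₂)
    {a b : ℝ} (ha : 0 ≤ a) (hb : 0 ≤ b) (hab : a + b = 1) :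
    ZFinite φ (a • l₁ + b • l₂) :=
  ⟨int_mid hφ h₁ h₂ ha hb hab,
    my_integral_pos (int_mid hφ h₁ h₂ ha hb hab) fun _ => Real.exp_pos _⟩

end Convexity

/-- If the features are minimal (no nonzero linear combination of the `φ_k` is a.e. constant),
then `Cov_{p_λ}(φ)` is positive definite for every `λ` with `Z(λ)` finite, and `Z` is strictly
convex on its domain. -/
theorem minimal_features_posdef_strictconvex {d m : ℕ}
    (φ : (Fin d → ℝ) → Fin m → ℝ) (hφ : Measurable φ)
    (hL2 : ∀ l : Fin m → ℝ, ZFinite φ l → ∀ k r,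
      Integrable (fun x : Fin d → ℝ => φ x k * φ x r * maxEntDensity φ l x) ∧
      Integrable (fun x : Fin d → ℝ => φ x k * maxEntDensity φ l x))
    (hmin : ∀ V : Fin m → ℝ,
      (∃ a : ℝ, ∀ᵐ x : Fin d → ℝ, (∑ k, V k * φ x k) = a) → V = 0) :
    (∀ l : Fin m → ℝ, ZFinite φ l → Matrix.PosDef (featCovMat φ l)) ∧
    StrictConvexOn ℝ {l : Fin m → ℝ | ZFinite φ l} (partZ φ) := by

  have part1 : ∀ l : Fin m → ℝ, ZFinite φ l → Matrix.PosDef (featCovMat φ l) := by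
    intro l hZ
    have hL2a : ∀ k r, Integrable (fun x : Fin d → ℝ => φ x k * φ x r * maxEntDensity φ l x) :=
      fun k r => (hL2 l hZ k r).1
    have hL2b : ∀ k, Integrable (fun x : Fin d → ℝ => φ x k * maxEntDensity φ l x) :=
      fun k => (hL2 l hZ k k).2
    refine Matrix.PosDef.of_dotProduct_mulVec_pos covmat_symm fun V hV => ?_
    rw [star_trivial, quad_form_eq hZ hL2a hL2b V]
    set M := ∫ y : Fin d → ℝ, (∑ k, V k * φ y k) * maxEntDensity φ l y with hMdef
    have hnn : 0 ≤ ∫ x : Fin d → ℝ, ((∑ k, V k * φ x k) - M) ^ 2 * maxEntDensity φ l x :=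
      integral_nonneg fun x => mul_nonneg (sq_nonneg _) (dens_pos x).le
    rcases hnn.lt_or_eq with hlt | heq
    · exact hlt
    · exfalso
      have hz := (integral_eq_zero_iff_of_nonneg_ae
        (Filter.Eventually.of_forall fun x => mul_nonneg (sq_nonneg _) (dens_pos x).le)
        (int_var hZ hL2a hL2b V M)).1 heq.symm
      have hconst : ∀ᵐ x : Fin d → ℝ, (∑ k, V k * φ x k) = M := by
        filter_upwards [hz] with x hx
        have hx' : ((∑ k, V k * φ x k) - M) ^ 2 * maxEntDensity φ l x = 0 := hx
        rcases mul_eq_zero.1 hx' with h0 | h0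
        · have := pow_eq_zero_iff (n := 2) (by norm_num) |>.1 h0
          linarith [this]
        · exact absurd h0 (dens_pos x).ne'
      exact hV (hmin V ⟨M, hconst⟩)
  refine ⟨part1, ?_, ?_⟩
  · -- convexity of the domain
    intro l₁ h₁ l₂ h₂ a b ha hb hab
    exact mid_ZFinite hφ h₁ h₂ ha hb hab
  · -- strict inequality
    intro l₁ h₁ l₂ h₂ hne a b ha hb hab
    have h₁' : ZFinite φ l₁ := h₁
    have h₂' : ZFinite φ l₂ := h₂
    set F : (Fin d → ℝ) → ℝ := fun x => Real.exp (∑ k, l₁ k * φ x k) with hF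
    set G : (Fin d → ℝ) → ℝ := fun x => Real.exp (∑ k, l₂ k * φ x k) with hG
    set A := ∫ x : Fin d → ℝ, F x with hAdef
    set B := ∫ x : Fin d → ℝ, G x with hBdef
    have hA : 0 < A := h₁'.2
    have hB : 0 < B := h₂'.2
    have hFi : Integrable F := h₁'.1
    have hGi : Integrable G := h₂'.1
    set h : (Fin d → ℝ) → ℝ := fun x => (F x / A) ^ a * (G x / B) ^ b with hh
    set H : (Fin d → ℝ) → ℝ := fun x => a * (F x / A) + b * (G x / B) with hH
    have hptle : ∀ x, h x ≤ H x := fun x =>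
      Real.geom_mean_le_arith_mean2_weighted ha.le hb.le
        (div_nonneg (Real.exp_pos _).le hA.le) (div_nonneg (Real.exp_pos _).le hB.le) hab
    have intH : Integrable H :=
      ((hFi.div_const A).const_mul a).add ((hGi.div_const B).const_mul b)
    have hrepr : h = fun x => Real.exp ((∑ k, l₁ k * φ x k) * a) * (A ^ a)⁻¹ *
        (Real.exp ((∑ k, l₂ k * φ x k) * b) * (B ^ b)⁻¹) := by
      funext x
      simp only [hh, hF, hG]
      rw [Real.div_rpow (Real.exp_pos _).le hA.le, Real.div_rpow (Real.exp_pos _).le hB.le,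
        ← Real.exp_mul, ← Real.exp_mul, div_eq_mul_inv, div_eq_mul_inv]
    have meash : Measurable h := by
      rw [hrepr]
      exact (((meas_sum hφ l₁).mul_const a).exp.mul_const _).mul
        (((meas_sum hφ l₂).mul_const b).exp.mul_const _)
    have inth : Integrable h := by
      refine Integrable.mono' intH meash.aestronglyMeasurable
        (Filter.Eventually.of_forall fun x => ?_)
      rw [Real.norm_eq_abs, abs_of_nonneg (mul_nonneg
        (Real.rpow_nonneg (div_nonneg (Real.exp_pos _).le hA.le) _)
        (Real.rpow_nonneg (div_nonneg (Real.exp_pos _).le hB.le) _))]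
      exact hptle x
    have intH_val : ∫ x : Fin d → ℝ, H x = 1 := by
      rw [hH]
      rw [integral_add ((hFi.div_const A).const_mul a) ((hGi.div_const B).const_mul b),
        integral_const_mul, integral_const_mul, integral_div, integral_div,
        ← hAdef, ← hBdef, div_self hA.ne', div_self hB.ne', mul_one, mul_one, hab]
    have h_le : ∫ x : Fin d → ℝ, h x ≤ 1 :=
      intH_val ▸ integral_mono inth intH hptle
    have h_lt : ∫ x : Fin d → ℝ, h x < 1 := by
      rcases h_le.lt_or_eq with hlt | heq1
      · exact hlt
      · exfalso
        have hsub : ∫ x : Fin d → ℝ, (H x - h x) = 0 := by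
          rw [integral_sub intH inth, intH_val, heq1, sub_self]
        have hae := (integral_eq_zero_iff_of_nonneg_ae
          (Filter.Eventually.of_forall fun x => sub_nonneg.2 (hptle x)) (intH.sub inth)).1 hsub
        have key : ∀ᵐ x : Fin d → ℝ, (∑ k, (l₁ - l₂) k * φ x k) = Real.log (A / B) := by
          filter_upwards [hae] with x hx
          have hx' : H x - h x = 0 := hx
          have heqx : h x = H x := by linarith
          have hFA : F x / A = G x / B :=
            amgm_eq (div_pos (Real.exp_pos _) hA) (div_pos (Real.exp_pos _) hB) ha hb hab heqx
          have hcross : F x * B = G x * A := (div_eq_div_iff hA.ne' hB.ne').1 hFA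
          have hexp : Real.exp ((∑ k, l₁ k * φ x k) - (∑ k, l₂ k * φ x k)) = A / B := by
            rw [Real.exp_sub, div_eq_div_iff (Real.exp_pos _).ne' hB.ne']
            exact hcross.trans (mul_comm _ _)
          have hlogs : (∑ k, l₁ k * φ x k) - (∑ k, l₂ k * φ x k) = Real.log (A / B) := by
            rw [← hexp, Real.log_exp]
          rw [← hlogs]
          simp [Pi.sub_apply, sub_mul, Finset.sum_sub_distrib]
        have hV0 : l₁ - l₂ = 0 := hmin _ ⟨_, key⟩
        exact hne (sub_eq_zero.1 hV0)
    have hAa : (0:ℝ) < A ^ a := Real.rpow_pos_of_pos hA a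
    have hBb : (0:ℝ) < B ^ b := Real.rpow_pos_of_pos hB b
    have hpt2 : ∀ x, Real.exp (∑ k, (a • l₁ + b • l₂) k * φ x k) = (A ^ a * B ^ b) * h x := by
      intro x
      rw [exp_combo]
      have hxv : h x = F x ^ a / A ^ a * (G x ^ b / B ^ b) := by
        simp only [hh]
        rw [Real.div_rpow (Real.exp_pos _).le hA.le, Real.div_rpow (Real.exp_pos _).le hB.le]
      rw [hxv]
      show F x ^ a * G x ^ b = A ^ a * B ^ b * (F x ^ a / A ^ a * (G x ^ b / B ^ b))
      field_simp
    have hmidint : ∫ x : Fin d → ℝ, Real.exp (∑ k, (a • l₁ + b • l₂) k * φ x k)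
        = (A ^ a * B ^ b) * ∫ x : Fin d → ℝ, h x := by
      rw [funext hpt2, integral_const_mul]
    have hmidpos : 0 < ∫ x : Fin d → ℝ, Real.exp (∑ k, (a • l₁ + b • l₂) k * φ x k) :=
      (mid_ZFinite hφ h₁' h₂' ha.le hb.le hab).2
    have hlt2 : ∫ x : Fin d → ℝ, Real.exp (∑ k, (a • l₁ + b • l₂) k * φ x k)
        < A ^ a * B ^ b := by
      rw [hmidint]
      calc (A ^ a * B ^ b) * ∫ x : Fin d → ℝ, h x
          < (A ^ a * B ^ b) * 1 := mul_lt_mul_of_pos_left h_lt (mul_pos hAa hBb)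
        _ = A ^ a * B ^ b := mul_one _
    show partZ φ (a • l₁ + b • l₂) < a • partZ φ l₁ + b • partZ φ l₂
    rw [smul_eq_mul, smul_eq_mul]
    calc partZ φ (a • l₁ + b • l₂)
        = Real.log (∫ x : Fin d → ℝ, Real.exp (∑ k, (a • l₁ + b • l₂) k * φ x k)) := rfl
      _ < Real.log (A ^ a * B ^ b) := Real.log_lt_log hmidpos hlt2
      _ = a * Real.log A + b * Real.log B := by
          rw [Real.log_mul hAa.ne' hBb.ne', Real.log_rpow hA, Real.log_rpow hB]
      _ = a * partZ φ l₁ + b * partZ φ l₂ := rfl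

end
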